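/- For distinct primes q₁, …, q_n different from 2, √2 does not belong to the field ℚ(√q₁, …, √q_n). -/

import Mathlib

/-- Quadratic extension: the set `{a + b√r}` with `a, b ∈ F` is a subfield when `√r ∉ F`. -/
noncomputable def adjoinSqrt (F : Subfield ℝ) (r : ℝ) (hr : 0 ≤ r) (hrF : r ∈ F)
    (hF : Real.sqrt r ∉ F) : Subfield ℝ where
  carrier := {x | ∃ a ∈ F, ∃ b ∈ F, x = a + b * Real.sqrt r}
  zero_mem' := ⟨0, F.zero_mem, 0, F.zero_mem, by ring⟩
  one_mem' := ⟨1, F.one_mem, 0, F.zero_mem, by ring⟩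
  add_mem' := by
    rintro x y ⟨a, ha, b, hb, rfl⟩ ⟨c, hc, d, hd, rfl⟩
    exact ⟨a + c, F.add_mem ha hc, b + d, F.add_mem hb hd, by ring⟩
  neg_mem' := by
    rintro x ⟨a, ha, b, hb, rfl⟩
    exact ⟨-a, F.neg_mem ha, -b, F.neg_mem hb, by ring⟩
  mul_mem' := by
    rintro x y ⟨a, ha, b, hb, rfl⟩ ⟨c, hc, d, hd, rfl⟩
    have hs : Real.sqrt r * Real.sqrt r = r := Real.mul_self_sqrt hr
    exact ⟨a * c + b * d * r, F.add_mem (F.mul_mem ha hc)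
      (F.mul_mem (F.mul_mem hb hd) hrF), a * d + b * c,
      F.add_mem (F.mul_mem ha hd) (F.mul_mem hb hc), by linear_combination (b*d) * hs⟩
  inv_mem' := by
    rintro x ⟨a, ha, b, hb, rfl⟩
    by_cases hx : a + b * Real.sqrt r = 0
    · rw [hx, inv_zero]; exact ⟨0, F.zero_mem, 0, F.zero_mem, by ring⟩
    have hs : Real.sqrt r * Real.sqrt r = r := Real.mul_self_sqrt hr
    have hd : a * a - b * b * r ≠ 0 := by
      intro h
      by_cases hb0 : b = 0
      · apply hx; rw [hb0] at h ⊢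
        have : a = 0 := by nlinarith
        simp [this]
      · apply hF
        have h2 : (a / b) ^ 2 = r := by field_simp; nlinarith
        rcases le_or_gt 0 (a / b) with hab | hab
        · have : Real.sqrt r = a / b := by rw [← h2, Real.sqrt_sq hab]
          rw [this]; exact F.div_mem ha hb
        · have : Real.sqrt r = -(a / b) := by
            rw [← h2, show (a/b)^2 = (-(a/b))^2 by ring, Real.sqrt_sq (by linarith)]
          rw [this]; exact F.neg_mem (F.div_mem ha hb)
    have hdF : a * a - b * b * r ∈ F :=
      F.sub_mem (F.mul_mem ha ha) (F.mul_mem (F.mul_mem hb hb) hrF)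
    refine ⟨a / (a * a - b * b * r), F.div_mem ha hdF,
      -b / (a * a - b * b * r), F.div_mem (F.neg_mem hb) hdF, ?_⟩
    apply inv_eq_of_mul_eq_one_right
    have hd2 : a ^ 2 - b ^ 2 * r ≠ 0 := by ring_nf at hd ⊢; exact hd
    field_simp
    linear_combination (-(b*b)) * hs

theorem sqrt_not_mem_closure (s : Finset ℕ) (hs : ∀ p ∈ s, Nat.Prime p) :
    ∀ m : ℕ, Squarefree m → 1 < m → (∀ p ∈ s, ¬ p ∣ m) →
      Real.sqrt m ∉ Subfield.closure ((fun p : ℕ => Real.sqrt p) '' ↑s) := by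
  induction s using Finset.induction_on with
  | empty =>
    intro m hm hm1 _ hmem
    rw [Finset.coe_empty, Set.image_empty] at hmem
    have hle : Subfield.closure (∅ : Set ℝ) ≤ (Rat.castHom ℝ).fieldRange :=
      (Subfield.closure_le).mpr (Set.empty_subset _)
    obtain ⟨qq, hq⟩ := hle hmem
    have hirr : Irrational (Real.sqrt m) := by
      rw [irrational_sqrt_natCast_iff]
      rintro ⟨k, hk⟩
      have h1 := hm k ⟨1, by rw [hk]; ring⟩
      rw [Nat.isUnit_iff] at h1
      subst h1
      omega
    exact hirr ⟨qq, hq⟩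
  | @insert r s' hrs' IH =>
    intro m hm hm1 hdvd hmem
    have hr : Nat.Prime r := hs r (Finset.mem_insert_self r s')
    have hs' : ∀ p ∈ s', Nat.Prime p := fun p hp => hs p (Finset.mem_insert_of_mem hp)
    set F := Subfield.closure ((fun p : ℕ => Real.sqrt p) '' ↑s') with hF
    have hrF : Real.sqrt r ∉ F := by
      apply IH hs' r hr.squarefree hr.one_lt
      intro p hp hpr
      exact hrs' (((Nat.prime_dvd_prime_iff_eq (hs' p hp) hr).mp hpr) ▸ hp)
    have hrnn : (0:ℝ) ≤ (r:ℝ) := by positivity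
    have hrmF : (r:ℝ) ∈ F := natCast_mem F r
    have hmF : (m:ℝ) ∈ F := natCast_mem F m
    set K := adjoinSqrt F (r:ℝ) hrnn hrmF hrF with hK
    have hle : Subfield.closure ((fun p : ℕ => Real.sqrt p) '' ↑(insert r s')) ≤ K := by
      rw [Subfield.closure_le]
      rintro x ⟨p, hp, rfl⟩
      rw [Finset.coe_insert, Set.mem_insert_iff] at hp
      rcases hp with rfl | hp
      · exact ⟨0, F.zero_mem, 1, F.one_mem, by ring⟩
      · exact ⟨Real.sqrt p, Subfield.subset_closure ⟨p, hp, rfl⟩, 0, F.zero_mem, by ring⟩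
    obtain ⟨a, ha, b, hb, hab⟩ := hle hmem
    have hs2 : Real.sqrt r * Real.sqrt r = (r:ℝ) := Real.mul_self_sqrt hrnn
    have hm2 : Real.sqrt m * Real.sqrt m = (m:ℝ) := Real.mul_self_sqrt (by positivity)
    have key : 2 * a * b * Real.sqrt r = (m:ℝ) - a^2 - b^2 * r := by
      have h : (m:ℝ) = (a + b * Real.sqrt r) * (a + b * Real.sqrt r) := by
        rw [← hm2, hab]
      nlinarith [hs2]
    by_cases hab0 : a * b = 0
    · rcases mul_eq_zero.mp hab0 with ha0 | hb0
      · rw [ha0, zero_add] at hab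
        have hrm : ¬ r ∣ m := hdvd r (Finset.mem_insert_self r s')
        have hcop : Nat.Coprime m r := ((hr.coprime_iff_not_dvd.mpr hrm).symm)
        apply IH hs' (m * r) ((Nat.squarefree_mul hcop).mpr ⟨hm, hr.squarefree⟩)
          (by nlinarith [hr.one_lt]) ?_ ?_
        · intro p hp hpdvd
          rcases (hs' p hp).dvd_mul.mp hpdvd with h | h
          · exact hdvd p (Finset.mem_insert_of_mem hp) h
          · exact hrs' (((Nat.prime_dvd_prime_iff_eq (hs' p hp) hr).mp h) ▸ hp)
        · have heq : Real.sqrt (m * r : ℕ) = b * r := by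
            push_cast
            rw [Real.sqrt_mul (by positivity), hab]
            linear_combination b * hs2
          rw [heq]
          exact F.mul_mem hb hrmF
      · rw [hb0, zero_mul, add_zero] at hab
        rw [← hab] at ha
        exact IH hs' m hm hm1 (fun p hp => hdvd p (Finset.mem_insert_of_mem hp)) ha
    · apply hrF
      have heq : Real.sqrt r = ((m:ℝ) - a^2 - b^2 * r) / (2 * a * b) := by
        have hne : 2 * a * b ≠ 0 := fun h => hab0 (by linarith)
        rw [eq_div_iff hne]
        linear_combination key
      have h2ab : 2 * a * b ∈ F := by
        have h1 : (2:ℝ) * a * b = a * b + a * b := by ring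
        rw [h1]
        exact F.add_mem (F.mul_mem ha hb) (F.mul_mem ha hb)
      rw [heq]
      exact F.div_mem (F.sub_mem (F.sub_mem hmF (F.pow_mem ha 2))
        (F.mul_mem (F.pow_mem hb 2) hrmF)) h2ab

/-- For distinct odd primes `q₁, …, q_n`, `√2 ∉ ℚ(√q₁, …, √q_n)`. -/
theorem sqrt_two_not_mem_multiquadratic (n : ℕ) (q : Fin n → ℕ)
    (hq : ∀ i, Nat.Prime (q i)) (hodd : ∀ i, q i ≠ 2)
    (hinj : Function.Injective q) :
    Real.sqrt 2 ∉ Subfield.closure (Set.range fun i => Real.sqrt (q i)) := by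
  have hset : Set.range (fun i => Real.sqrt (q i)) =
      (fun p : ℕ => Real.sqrt p) '' ↑(Finset.image q Finset.univ) := by
    ext x
    simp only [Set.mem_range, Finset.coe_image, Finset.coe_univ, Set.image_univ, Set.mem_image]
    constructor
    · rintro ⟨i, rfl⟩; exact ⟨q i, ⟨i, rfl⟩, rfl⟩
    · rintro ⟨p, ⟨i, rfl⟩, rfl⟩; exact ⟨i, rfl⟩
  rw [hset]
  have h2 : Real.sqrt (2:ℕ) = Real.sqrt 2 := by norm_num
  rw [← h2]
  apply sqrt_not_mem_closure
  · intro p hp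
    rw [Finset.mem_image] at hp
    obtain ⟨i, _, rfl⟩ := hp
    exact hq i
  · exact Nat.prime_two.squarefree
  · norm_num
  · intro p hp hpd
    rw [Finset.mem_image] at hp
    obtain ⟨i, _, rfl⟩ := hp
    have := (Nat.prime_dvd_prime_iff_eq (hq i) Nat.prime_two).mp hpd
    exact hodd i this
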